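/- Let S, A be finite nonempty sets, r : S × A → ℝ, γ ∈ [0,1), η ≥ 0, and P(·|s,a) a probability distribution on S for each (s,a). Define the shaped Bellman operator T by (TQ)(s,a) = r(s,a) + γ·E_{s'∼P(·|s,a)}[Φ_Q(s')] − Φ_Q(s) + γ·E_{s'∼P(·|s,a)}[max_{a'} Q(s',a')], where Φ_Q(s) = η·max_a Q(s,a). Then for all Q1, Q2: ‖T Q1 − T Q2‖_∞ ≤ (η(1+γ) + γ)·‖Q1 − Q2‖_∞. -/
import Mathlib

private lemma sup_diff_le_aux {A : Type*} [Fintype A] [Nonempty A] (f g : A → ℝ) (M : ℝ)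
    (h : ∀ a, |f a - g a| ≤ M) : |(⨆ a, f a) - ⨆ a, g a| ≤ M := by
  rw [abs_sub_le_iff]
  constructor
  · rw [sub_le_iff_le_add]
    refine ciSup_le fun a => ?_
    have h1 := le_ciSup (Set.Finite.bddAbove (Set.finite_range g)) a
    have h2 := (abs_le.mp (h a)).2
    linarith
  · rw [sub_le_iff_le_add]
    refine ciSup_le fun a => ?_
    have h1 := le_ciSup (Set.Finite.bddAbove (Set.finite_range f)) a
    have h2 := (abs_le.mp (h a)).1
    linarith

/-- The shaped Bellman operator
`(TQ)(s,a) = r(s,a) + γ·E[Φ_Q(s')] − Φ_Q(s) + γ·E[max_{a'} Q(s',a')]`,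
with `Φ_Q(s) = η·max_a Q(s,a)`, satisfies
`‖T Q1 − T Q2‖_∞ ≤ (η(1+γ) + γ)·‖Q1 − Q2‖_∞` on a finite MDP. -/
theorem shaped_bellman_lipschitz {S A : Type*} [Fintype S] [Nonempty S] [Fintype A] [Nonempty A]
    (r : S → A → ℝ) (γ η : ℝ) (hγ0 : 0 ≤ γ) (hγ1 : γ < 1) (hη : 0 ≤ η)
    (P : S → A → S → ℝ) (hP0 : ∀ s a s', 0 ≤ P s a s') (hP1 : ∀ s a, ∑ s', P s a s' = 1)
    (T : (S → A → ℝ) → (S → A → ℝ))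
    (hT : ∀ Q s a, T Q s a =
      r s a + γ * (∑ s', P s a s' * (η * ⨆ a' : A, Q s' a'))
        - η * (⨆ a' : A, Q s a')
        + γ * (∑ s', P s a s' * ⨆ a' : A, Q s' a'))
    (Q1 Q2 : S → A → ℝ) :
    (⨆ p : S × A, |T Q1 p.1 p.2 - T Q2 p.1 p.2|) ≤
      (η * (1 + γ) + γ) * ⨆ p : S × A, |Q1 p.1 p.2 - Q2 p.1 p.2| := by
  set M := ⨆ p : S × A, |Q1 p.1 p.2 - Q2 p.1 p.2| with hMdef
  have hMb : ∀ s a, |Q1 s a - Q2 s a| ≤ M := fun s a =>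
    le_ciSup (f := fun p : S × A => |Q1 p.1 p.2 - Q2 p.1 p.2|)
      (Set.Finite.bddAbove (Set.finite_range _)) ((s, a) : S × A)
  have hM0 : 0 ≤ M :=
    le_trans (abs_nonneg _) (hMb (Classical.arbitrary S) (Classical.arbitrary A))
  have hd : ∀ s, |(⨆ a, Q1 s a) - ⨆ a, Q2 s a| ≤ M := fun s =>
    sup_diff_le_aux _ _ _ (fun a => hMb s a)
  refine ciSup_le fun p => ?_
  obtain ⟨s, a⟩ := p
  have hsum : |∑ s', P s a s' * ((⨆ a', Q1 s' a') - ⨆ a', Q2 s' a')| ≤ M := by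
    calc |∑ s', P s a s' * ((⨆ a', Q1 s' a') - ⨆ a', Q2 s' a')|
        ≤ ∑ s', |P s a s' * ((⨆ a', Q1 s' a') - ⨆ a', Q2 s' a')| :=
          Finset.abs_sum_le_sum_abs _ _
      _ ≤ ∑ s', P s a s' * M := by
          refine Finset.sum_le_sum fun s' _ => ?_
          rw [abs_mul, abs_of_nonneg (hP0 s a s')]
          exact mul_le_mul_of_nonneg_left (hd s') (hP0 s a s')
      _ = M := by rw [← Finset.sum_mul, hP1, one_mul]
  set D := ∑ s', P s a s' * ((⨆ a', Q1 s' a') - ⨆ a', Q2 s' a') with hDdef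
  have e1 : ∀ (Q : S → A → ℝ),
      ∑ s', P s a s' * (η * ⨆ a', Q s' a') = η * ∑ s', P s a s' * ⨆ a', Q s' a' := by
    intro Q
    rw [Finset.mul_sum]
    exact Finset.sum_congr rfl fun _ _ => by ring
  have hsub : D = (∑ s', P s a s' * ⨆ a', Q1 s' a') - ∑ s', P s a s' * ⨆ a', Q2 s' a' := by
    rw [hDdef, ← Finset.sum_sub_distrib]
    exact Finset.sum_congr rfl fun _ _ => by ring
  have key : T Q1 s a - T Q2 s a =
      γ * η * D - η * ((⨆ a', Q1 s a') - ⨆ a', Q2 s a') + γ * D := by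
    rw [hT, hT, e1 Q1, e1 Q2, hsub]; ring
  have hds := hd s
  have b1 : |γ * η * D| ≤ γ * η * M := by
    rw [abs_mul, abs_mul, abs_of_nonneg hγ0, abs_of_nonneg hη]
    exact mul_le_mul_of_nonneg_left hsum (by positivity)
  have b2 : |η * ((⨆ a', Q1 s a') - ⨆ a', Q2 s a')| ≤ η * M := by
    rw [abs_mul, abs_of_nonneg hη]
    exact mul_le_mul_of_nonneg_left hds hη
  have b3 : |γ * D| ≤ γ * M := by
    rw [abs_mul, abs_of_nonneg hγ0]
    exact mul_le_mul_of_nonneg_left hsum hγ0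
  calc |T Q1 s a - T Q2 s a|
      = |γ * η * D - η * ((⨆ a', Q1 s a') - ⨆ a', Q2 s a') + γ * D| := by rw [key]
    _ ≤ |γ * η * D - η * ((⨆ a', Q1 s a') - ⨆ a', Q2 s a')| + |γ * D| := abs_add_le _ _
    _ ≤ |γ * η * D| + |η * ((⨆ a', Q1 s a') - ⨆ a', Q2 s a')| + |γ * D| := by
        have := abs_sub (γ * η * D) (η * ((⨆ a', Q1 s a') - ⨆ a', Q2 s a'))
        linarith
    _ ≤ (η * (1 + γ) + γ) * M := by nlinarith
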